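/- For the PU on–off sampling model, let V_{ũ_a,N}(T_1,…,T_{N−1}) = u(1−u)/N + (2u(1−u)/N²)·∑_{i=1}^{N−1} ∑_{j=1}^{N−i} ∏_{k=j}^{i+j−1} e^{−T_k λ_f/u} and let V_{ũ_a,N+1}(T_1,…,T_N) be the analogous expression with N+1 samples (obtained by appending one further inter-sample time T_N > 0). Then the decrease in mean squared error from one extra sample satisfies D_{ũ_a,N+1} := V_{ũ_a,N} − V_{ũ_a,N+1} = ((2N+1)/(N+1)²)·V_{ũ_a,N} − (u(1−u)/(N+1)²)·(1 + 2·∑_{i=0}^{N−1} ∏_{k=N−i}^{N} e^{−T_k λ_f/u}). -/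

import Mathlib

open Finset

/-- Closed form for the mean squared error of the averaging duty-cycle estimator
with `N` samples and inter-sample times `T 1, …, T (N-1)`:
`V = u(1-u)/N + (2u(1-u)/N²) ∑_{i=1}^{N-1} ∑_{j=1}^{N-i} ∏_{k=j}^{i+j-1} e^{-T_k λ_f/u}`. -/
noncomputable def Vavg (u lf : ℝ) (N : ℕ) (T : ℕ → ℝ) : ℝ :=
  u * (1 - u) / (N : ℝ) + 2 * u * (1 - u) / (N : ℝ) ^ 2 *
    ∑ i ∈ Finset.Icc 1 (N - 1), ∑ j ∈ Finset.Icc 1 (N - i),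
      ∏ k ∈ Finset.Icc j (i + j - 1), Real.exp (-(lf * T k) / u)

/-- decrease of the mean squared error obtained from one extra sample. -/
theorem avg_estimator_mse_decrease (u lf : ℝ) (hu : 0 < u) (hu1 : u < 1) (hlf : 0 < lf)
    (N : ℕ) (hN : 2 ≤ N) (T : ℕ → ℝ) (hT : ∀ k, 1 ≤ k → k ≤ N → 0 < T k) :
    Vavg u lf N T - Vavg u lf (N + 1) T
      = (2 * (N : ℝ) + 1) / ((N : ℝ) + 1) ^ 2 * Vavg u lf N T
        - u * (1 - u) / ((N : ℝ) + 1) ^ 2 *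
          (1 + 2 * ∑ i ∈ Finset.range N,
            ∏ k ∈ Finset.Icc (N - i) N, Real.exp (-(lf * T k) / u)) := by
  set e : ℕ → ℝ := fun k => Real.exp (-(lf * T k) / u) with he
  set P : ℕ → ℕ → ℝ := fun i j => ∏ k ∈ Finset.Icc j (i + j - 1), e k with hP
  have key : ∑ i ∈ Finset.Icc 1 (N + 1 - 1), ∑ j ∈ Finset.Icc 1 (N + 1 - i), P i j
      = (∑ i ∈ Finset.Icc 1 (N - 1), ∑ j ∈ Finset.Icc 1 (N - i), P i j)
        + ∑ i ∈ Finset.range N, ∏ k ∈ Finset.Icc (N - i) N, e k := by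
    have h0 : N + 1 - 1 = N := by omega
    rw [h0]
    have step1 : ∑ i ∈ Finset.Icc 1 N, ∑ j ∈ Finset.Icc 1 (N + 1 - i), P i j
        = ∑ i ∈ Finset.Icc 1 N, ((∑ j ∈ Finset.Icc 1 (N - i), P i j) + P i (N - i + 1)) := by
      refine Finset.sum_congr rfl ?_
      intro i hi
      simp only [Finset.mem_Icc] at hi
      rw [show N + 1 - i = (N - i) + 1 by omega,
        Finset.sum_Icc_succ_top (by omega : 1 ≤ N - i + 1)]
    rw [step1, Finset.sum_add_distrib]
    congr 1
    · have h2 := Finset.sum_Icc_succ_top (a := 1) (b := N - 1)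
        (f := fun i => ∑ j ∈ Finset.Icc 1 (N - i), P i j) (by omega)
      rw [show N - 1 + 1 = N by omega] at h2
      rw [h2, show N - N = 0 by omega]
      simp
    · refine Finset.sum_nbij' (fun a => a - 1) (fun a => a + 1) ?_ ?_ ?_ ?_ ?_
      · intro a ha; simp only [Finset.mem_Icc] at ha; simp only [Finset.mem_range]; omega
      · intro a ha; simp only [Finset.mem_range] at ha; simp only [Finset.mem_Icc]; omega
      · intro a ha; simp only [Finset.mem_Icc] at ha; omega
      · intro a ha; omega
      · intro a ha
        simp only [Finset.mem_Icc] at ha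
        have h3 : N - (a - 1) = N - a + 1 := by omega
        have h4 : a + (N - a + 1) - 1 = N := by omega
        simp only [hP, h3, h4]
  have hNR : (N : ℝ) ≠ 0 := by positivity
  have hNR1 : (N : ℝ) + 1 ≠ 0 := by positivity
  have hval : Vavg u lf (N + 1) T
      = u * (1 - u) / ((N : ℝ) + 1) + 2 * u * (1 - u) / ((N : ℝ) + 1) ^ 2 *
        ((∑ i ∈ Finset.Icc 1 (N - 1), ∑ j ∈ Finset.Icc 1 (N - i), P i j)
          + ∑ i ∈ Finset.range N, ∏ k ∈ Finset.Icc (N - i) N, e k) := by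
    rw [Vavg, ← key]
    push_cast
    rfl
  rw [hval, Vavg]
  rw [show (∑ i ∈ Finset.Icc 1 (N - 1), ∑ j ∈ Finset.Icc 1 (N - i), ∏ k ∈ Finset.Icc j (i + j - 1), Real.exp (-(lf * T k) / u)) = ∑ i ∈ Finset.Icc 1 (N - 1), ∑ j ∈ Finset.Icc 1 (N - i), P i j from rfl]
  field_simp
  ring
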